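/- For every n ≥ 1, the total number of P3-matches over all words in 𝓛_n equals the total number of P2-matches over all words in 𝓛_n: Σ_{L ∈ 𝓛_n} P3-mch(L) = Σ_{L ∈ 𝓛_n} P2-mch(L). -/

import Mathlib

/-!
Words over the alphabet {E, N} are encoded as `List Bool`,
with `true` representing an east step `E` and `false` a north step `N`.
The word `w = w_1 ⋯ w_{2n}` corresponds to the lattice path from `(0,0)` to
`(n,n)` whose `j`-th step is east if `w_j = true` and north if `w_j = false`.
-/

/-- `w ∈ 𝓛_n`: the word `w` has exactly `n` `E`'s and `n` `N`'s. -/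
def memL (n : ℕ) (w : List Bool) : Prop :=
  w.count true = n ∧ w.count false = n

/-- The (0-indexed, increasing) list of positions at which the letter `b` occurs in `w`. -/
def occPos (w : List Bool) (b : Bool) : List ℕ :=
  (List.range w.length).filter (fun j => w.getD j (!b) == b)

/-- `ps_w({i, i+1})` (with `i` 1-indexed): the length-4 word obtained from `w` by
deleting, for each `j ∉ {i, i+1}`, the `j`-th occurrence of `E` and the `j`-th
occurrence of `N` (counted from left to right); i.e. the word formed by the
`i`-th and `(i+1)`-th occurrences of `E` and of `N`, read in their original order. -/
def pairedSubword (w : List Bool) (i : ℕ) : List Bool :=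
  let keep : List ℕ := [(occPos w true).getD (i-1) 0, (occPos w true).getD i 0,
                        (occPos w false).getD (i-1) 0, (occPos w false).getD i 0]
  ((List.range w.length).filter (fun j => keep.contains j)).map (fun j => w.getD j true)

/-- `P`-mch(w): the number of paired steps `i` with `1 ≤ i ≤ n-1` at which the
paired pattern `P` matches in `w ∈ 𝓛_n`. -/
def pmch (n : ℕ) (P w : List Bool) : ℕ :=
  ((Finset.Icc 1 (n-1)).filter (fun i => pairedSubword w i = P)).card

def P1 : List Bool := [true, true, false, false]   -- EENN
def P2 : List Bool := [true, false, true, false]   -- ENEN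
def P3 : List Bool := [false, true, true, false]   -- NEEN
def P4 : List Bool := [true, false, false, true]   -- ENNE
def P5 : List Bool := [false, true, false, true]   -- NENE
def P6 : List Bool := [false, false, true, true]   -- NNEE

namespace Aux

lemma length_eq_counts (l : List Bool) : l.length = l.count true + l.count false := by
  induction l with
  | nil => simp
  | cons x l ih =>
    cases x <;> simp only [List.length_cons, List.count_cons, ih] <;> simp <;> omega

lemma count_map_not (l : List Bool) (b : Bool) : (l.map not).count b = l.count (!b) := by
  induction l with
  | nil => simp
  | cons x l ih => cases x <;> cases b <;> simp [List.count_cons, ih]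

lemma occPos_cons (x : Bool) (w : List Bool) (b : Bool) :
    occPos (x :: w) b = (if x = b then [0] else []) ++ (occPos w b).map (· + 1) := by
  have h1 : occPos (x :: w) b
      = List.filter (fun j => (x :: w).getD j (!b) == b)
          (0 :: (List.range w.length).map Nat.succ) := by
    rw [occPos, List.length_cons, List.range_succ_eq_map]
  rw [h1, List.filter_cons, List.filter_map]
  have hcomp : ((fun j => (x :: w).getD j (!b) == b) ∘ Nat.succ)
      = (fun j => w.getD j (!b) == b) := by
    funext j; simp [List.getD_cons_succ]
  rw [hcomp]
  by_cases h : x = b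
  · simp [h, occPos, Nat.succ_eq_add_one]
  · have : ((x :: w).getD 0 (!b) == b) = false := by
      simp [List.getD_cons_zero]; exact h
    simp [this, h, occPos, Nat.succ_eq_add_one]

lemma occPos_append (u v : List Bool) (b : Bool) :
    occPos (u ++ v) b = occPos u b ++ (occPos v b).map (· + u.length) := by
  induction u with
  | nil => simp [occPos]
  | cons x u ih =>
    simp only [List.cons_append, occPos_cons, ih, List.map_append, List.map_map,
      List.length_cons, List.append_assoc]
    congr 2

lemma length_occPos (w : List Bool) (b : Bool) : (occPos w b).length = w.count b := by
  induction w with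
  | nil => simp [occPos]
  | cons x w ih =>
    by_cases h : x = b <;> simp [occPos_cons, h, ih, List.count_cons]

lemma mem_occPos {w : List Bool} {b : Bool} {p : ℕ} :
    p ∈ occPos w b ↔ ∃ h : p < w.length, w[p] = b := by
  simp only [occPos, List.mem_filter, List.mem_range, beq_iff_eq]
  constructor
  · rintro ⟨h1, h2⟩
    exact ⟨h1, by rwa [List.getD_eq_getElem _ _ h1] at h2⟩
  · rintro ⟨h1, h2⟩
    exact ⟨h1, by rwa [List.getD_eq_getElem _ _ h1]⟩

lemma sorted_occPos (w : List Bool) (b : Bool) : (occPos w b).Pairwise (· < ·) :=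
  List.Pairwise.filter _ (List.pairwise_lt_range)

end Aux
namespace Aux2
open Aux

lemma sorted_getElem_lt {l : List ℕ} (hl : l.Pairwise (· < ·)) {k m : ℕ}
    (hk : k < l.length) (hm : m < l.length) (h : k < m) : l[k] < l[m] :=
  (List.pairwise_iff_getElem.1 hl) k m hk hm h

lemma sorted_getElem_le {l : List ℕ} (hl : l.Pairwise (· < ·)) {k m : ℕ}
    (hk : k < l.length) (hm : m < l.length) (h : k ≤ m) : l[k] ≤ l[m] := by
  rcases Nat.lt_or_ge k m with h' | h'
  · exact le_of_lt (sorted_getElem_lt hl hk hm h')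
  · have : k = m := le_antisymm h h'
    subst this; rfl

lemma sorted_lt_of_getElem_lt {l : List ℕ} (hl : l.Pairwise (· < ·)) {k m : ℕ}
    (hk : k < l.length) (hm : m < l.length) (h : l[k] < l[m]) : k < m := by
  by_contra hc
  exact absurd (sorted_getElem_le hl hm hk (by omega)) (by omega)

lemma sorted_getElem_inj {l : List ℕ} (hl : l.Pairwise (· < ·)) {k m : ℕ}
    (hk : k < l.length) (hm : m < l.length) (h : l[k] = l[m]) : k = m := by
  rcases Nat.lt_trichotomy k m with h' | h' | h'
  · exact absurd (sorted_getElem_lt hl hk hm h') (by omega)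
  · exact h'
  · exact absurd (sorted_getElem_lt hl hm hk h') (by omega)

lemma filter_range_eq {L : ℕ} (t : List ℕ) {s : List ℕ} (hs : s.Pairwise (· < ·))
    (hmem : ∀ x, x ∈ s ↔ x ∈ t) (hlt : ∀ x ∈ s, x < L) :
    (List.range L).filter (fun j => t.contains j) = s := by
  haveI : IsAntisymm ℕ (· < ·) := ⟨fun a b h1 h2 => absurd h1 (asymm h2)⟩
  apply fun h1 h2 => List.Perm.eq_of_pairwise (fun _ _ _ _ a b => absurd a (asymm b)) h2 hs h1
  · apply (List.perm_ext_iff_of_nodup ?_ hs.nodup).2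
    · intro x
      have hc : (t.contains x = true) ↔ x ∈ t := by simp
      simp only [List.mem_filter, List.mem_range, hc, ← hmem x]
      exact ⟨fun h => h.2, fun h => ⟨hlt x h, h⟩⟩
    · exact List.Nodup.filter _ (List.nodup_range (n := L))
  · exact List.Pairwise.filter _ (List.pairwise_lt_range)

lemma getD_occPos {w : List Bool} {b : Bool} {k : ℕ} (hk : k < (occPos w b).length) :
    w.getD ((occPos w b)[k]) true = b := by
  obtain ⟨h1, h2⟩ := mem_occPos.1 (List.getElem_mem hk)
  rw [List.getD_eq_getElem _ _ h1, h2]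

lemma occPos_getElem_lt {w : List Bool} {b : Bool} {k : ℕ} (hk : k < (occPos w b).length) :
    (occPos w b)[k] < w.length :=
  (mem_occPos.1 (List.getElem_mem hk)).1

lemma PS_concrete {w : List Bool} {i : ℕ} (hi : 1 ≤ i)
    (ht : i < (occPos w true).length) (hf : i < (occPos w false).length)
    {x1 x2 x3 x4 : ℕ} (h12 : x1 < x2) (h23 : x2 < x3) (h34 : x3 < x4)
    (hperm : ∀ x, (x = x1 ∨ x = x2 ∨ x = x3 ∨ x = x4) ↔
      (x = (occPos w true)[i-1]'(by omega) ∨ x = (occPos w true)[i]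
        ∨ x = (occPos w false)[i-1]'(by omega) ∨ x = (occPos w false)[i])) :
    pairedSubword w i
      = [w.getD x1 true, w.getD x2 true, w.getD x3 true, w.getD x4 true] := by
  have ht1 : i - 1 < (occPos w true).length := by omega
  have hf1 : i - 1 < (occPos w false).length := by omega
  have hx : ∀ x, (x = x1 ∨ x = x2 ∨ x = x3 ∨ x = x4) → x < w.length := by
    intro x hxm
    rcases (hperm x).1 hxm with h | h | h | h <;> subst h
    · exact occPos_getElem_lt ht1
    · exact occPos_getElem_lt ht
    · exact occPos_getElem_lt hf1
    · exact occPos_getElem_lt hf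
  simp only [pairedSubword]
  rw [List.getD_eq_getElem _ _ ht1, List.getD_eq_getElem _ _ ht,
    List.getD_eq_getElem _ _ hf1, List.getD_eq_getElem _ _ hf]
  rw [filter_range_eq _ (s := [x1, x2, x3, x4]) ?hs ?hm ?hl]
  case hs =>
    refine List.Pairwise.cons ?_ (List.Pairwise.cons ?_ (List.Pairwise.cons ?_
      (List.pairwise_singleton _ _)))
    · intro y hy; simp at hy; rcases hy with h | h | h <;> omega
    · intro y hy; simp at hy; rcases hy with h | h <;> omega
    · intro y hy; simp at hy; omega
  case hm =>
    intro x
    simpa only [List.mem_cons, List.not_mem_nil, or_false] using hperm x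
  case hl =>
    intro x hxm
    exact hx x (by simpa using hxm)
  · simp

lemma occPos_getElem_decomp (u v : List Bool) (b : Bool)
    (h : u.count b < (occPos (u ++ b :: v) b).length) :
    (occPos (u ++ b :: v) b)[u.count b] = u.length := by
  have hlen : (occPos u b).length = u.count b := length_occPos u b
  have he : occPos (u ++ b :: v) b
      = occPos u b ++ ((0 :: (occPos v b).map (· + 1)).map (· + u.length)) := by
    rw [occPos_append, occPos_cons, if_pos rfl]
    rfl
  rw [List.getElem_of_eq he]
  rw [List.getElem_append_right (by rw [hlen])]
  simp [hlen]

lemma exists_decomp_of_getElem {w : List Bool} {b : Bool} {k : ℕ}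
    (hk : k < (occPos w b).length) :
    ∃ u v, w = u ++ b :: v ∧ u.length = (occPos w b)[k] ∧ u.count b = k := by
  set p := (occPos w b)[k] with hp
  obtain ⟨hplen, hpb⟩ := mem_occPos.1 (List.getElem_mem hk)
  have hw : w = w.take p ++ b :: w.drop (p+1) := by
    conv_lhs => rw [← List.take_append_drop p w]
    rw [List.drop_eq_getElem_cons hplen, hpb]
  have hlt : (w.take p).length = p := by simp; omega
  refine ⟨w.take p, w.drop (p+1), hw, hlt, ?_⟩
  -- index identification
  have hk' : (w.take p).count b < (occPos w b).length := by
    conv_rhs => rw [hw]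
    rw [length_occPos]
    simp [List.count_append, List.count_cons]
    try omega
  have h2 : (occPos w b)[(w.take p).count b] = p := by
    rw [List.getElem_of_eq (congrArg (fun x => occPos x b) hw)]
    rw [occPos_getElem_decomp _ _ _ (by rw [← hw]; exact hk')]
    exact hlt
  exact sorted_getElem_inj (sorted_occPos w b) hk' hk (by rw [h2, hp])

lemma count_take_between {w : List Bool} {b : Bool} {k p : ℕ}
    (hk1 : k + 1 < (occPos w b).length)
    (h1 : (occPos w b)[k] < p) (h2 : p < (occPos w b)[k+1]) (hp : p ≤ w.length) :
    (w.take p).count b = k + 1 := by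
  have hlt : (w.take p).length = p := by simp; omega
  have hsplit : occPos w b
      = occPos (w.take p) b ++ (occPos (w.drop p) b).map (· + p) := by
    conv_lhs => rw [← List.take_append_drop p w]
    rw [occPos_append, hlt]
  set m := (occPos (w.take p) b).length with hm
  have hmc : (w.take p).count b = m := (length_occPos _ _).symm
  rcases Nat.lt_trichotomy m (k+1) with hc | hc | hc
  · -- m ≤ k : element k is in second part, ≥ p
    exfalso
    have hge : p ≤ (occPos w b)[k] := by
      have hkk : k < (occPos w b).length := by omega
      have : (occPos w b)[k] = ((occPos (w.drop p) b).map (· + p))[k - m]'(by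
          rw [hsplit] at hkk; simp at hkk; simp; omega) := by
        rw [List.getElem_of_eq hsplit]
        rw [List.getElem_append_right (by omega)]
      rw [this]
      simp
      try omega
    omega
  · rw [hmc, hc]
  · -- k+1 < m : element k+1 is in first part, < p
    exfalso
    have hlt2 : (occPos w b)[k+1] < p := by
      have : (occPos w b)[k+1] = (occPos (w.take p) b)[k+1]'(by omega) := by
        rw [List.getElem_of_eq hsplit]
        rw [List.getElem_append_left (by omega)]
      rw [this]
      have := occPos_getElem_lt (w := w.take p) (b := b) (k := k+1) (by omega)
      omega
    omega

lemma occPos_getElem_decomp' (u v : List Bool) (b : Bool) {w : List Bool} {k : ℕ}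
    (hw : w = u ++ b :: v) (hk : k = u.count b) (h : k < (occPos w b).length) :
    (occPos w b)[k] = u.length := by
  subst hw; subst hk; exact occPos_getElem_decomp u v b h

lemma PS3_of_decomp {n i : ℕ} {u v : List Bool}
    (hi1 : 1 ≤ i) (hi2 : i < n) (hw : memL n (u ++ true :: true :: v))
    (hut : u.count true = i - 1) (huf : u.count false = i) :
    pairedSubword (u ++ true :: true :: v) i = [false, true, true, false] := by
  set w := u ++ true :: true :: v with hwdef
  have hvf : 1 ≤ v.count false := by
    have := hw.2
    simp only [hwdef, List.count_append, List.count_cons] at this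
    simp at this
    omega
  have ht : i < (occPos w true).length := by rw [length_occPos, hw.1]; omega
  have hf : i < (occPos w false).length := by rw [length_occPos, hw.2]; omega
  have ht1 : i - 1 < (occPos w true).length := by omega
  have hf1 : i - 1 < (occPos w false).length := by omega
  have hulen : (occPos u false).length = i := by rw [length_occPos, huf]
  have hp1 : (occPos w true)[i-1] = u.length :=
    occPos_getElem_decomp' u (true :: v) true rfl hut.symm ht1
  have hp2 : (occPos w true)[i] = u.length + 1 := by
    have := occPos_getElem_decomp' (u ++ [true]) (v) true (w := w) (k := i)
      (by simp [hwdef]) (by simp [List.count_append, hut]; omega) ht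
    simpa using this
  have hsplit : occPos w false
      = occPos u false ++ (occPos (true :: true :: v) false).map (· + u.length) :=
    occPos_append u _ false
  have hq1 : (occPos w false)[i-1] < u.length := by
    have heq : (occPos w false)[i-1] = (occPos u false)[i-1]'(by omega) := by
      rw [List.getElem_of_eq hsplit, List.getElem_append_left (by omega)]
    rw [heq]
    exact occPos_getElem_lt (by omega)
  have hq2 : u.length + 2 ≤ (occPos w false)[i] := by
    have hcc : occPos (true :: true :: v) false
        = ((occPos v false).map (· + 1)).map (· + 1) := by
      rw [occPos_cons, if_neg (by decide), occPos_cons, if_neg (by decide)]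
      simp
    have hvlen : 0 < (occPos v false).length := by rw [length_occPos]; omega
    have heq : (occPos w false)[i]
        = ((((occPos v false).map (· + 1)).map (· + 1)).map (· + u.length))[i - i]'(by
            simp; omega) := by
      rw [List.getElem_of_eq (by rw [hsplit, hcc])]
      rw [List.getElem_append_right (by omega)]
      congr 1
      omega
    rw [heq]
    simp
    omega
  have hP1 : w.getD ((occPos w true)[i-1]) true = true := getD_occPos ht1
  have hP2 : w.getD ((occPos w true)[i]) true = true := getD_occPos ht
  have hQ1 : w.getD ((occPos w false)[i-1]) true = false := getD_occPos hf1
  have hQ2 : w.getD ((occPos w false)[i]) true = false := getD_occPos hf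
  have := PS_concrete hi1 ht hf
    (x1 := (occPos w false)[i-1]) (x2 := (occPos w true)[i-1])
    (x3 := (occPos w true)[i]) (x4 := (occPos w false)[i])
    (by omega) (by omega) (by omega) (by intro x; tauto)
  rw [this, hP1, hP2, hQ1, hQ2]

lemma PS2_of_decomp {n i : ℕ} {u v : List Bool}
    (hi1 : 1 ≤ i) (hi2 : i < n) (hw : memL n (u ++ false :: true :: v))
    (hut : u.count true = i) (huf : u.count false = i - 1) :
    pairedSubword (u ++ false :: true :: v) i = [true, false, true, false] := by
  set w := u ++ false :: true :: v with hwdef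
  have hvf : 1 ≤ v.count false := by
    have := hw.2
    simp only [hwdef, List.count_append, List.count_cons] at this
    simp at this
    omega
  have ht : i < (occPos w true).length := by rw [length_occPos, hw.1]; omega
  have hf : i < (occPos w false).length := by rw [length_occPos, hw.2]; omega
  have ht1 : i - 1 < (occPos w true).length := by omega
  have hf1 : i - 1 < (occPos w false).length := by omega
  have hulen : (occPos u true).length = i := by rw [length_occPos, hut]
  have hq1 : (occPos w false)[i-1] = u.length :=
    occPos_getElem_decomp' u (true :: v) false rfl huf.symm hf1
  have hp2 : (occPos w true)[i] = u.length + 1 := by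
    have := occPos_getElem_decomp' (u ++ [false]) (v) true (w := w) (k := i)
      (by simp [hwdef]) (by simp [List.count_append, hut]) ht
    simpa using this
  have hsplit : occPos w true
      = occPos u true ++ (occPos (false :: true :: v) true).map (· + u.length) :=
    occPos_append u _ true
  have hp1 : (occPos w true)[i-1] < u.length := by
    have heq : (occPos w true)[i-1] = (occPos u true)[i-1]'(by omega) := by
      rw [List.getElem_of_eq hsplit, List.getElem_append_left (by omega)]
    rw [heq]
    exact occPos_getElem_lt (by omega)
  have hfsplit : occPos w false
      = occPos u false ++ (occPos (false :: true :: v) false).map (· + u.length) :=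
    occPos_append u _ false
  have huflen : (occPos u false).length = i - 1 := by rw [length_occPos, huf]
  have hq2 : u.length + 2 ≤ (occPos w false)[i] := by
    have hcc : occPos (false :: true :: v) false
        = 0 :: ((occPos v false).map (· + 1)).map (· + 1) := by
      rw [occPos_cons, if_pos rfl, occPos_cons, if_neg (by decide)]
      simp
    have hvlen : 0 < (occPos v false).length := by rw [length_occPos]; omega
    have heq : (occPos w false)[i]
        = ((0 :: ((occPos v false).map (· + 1)).map (· + 1)).map (· + u.length))[1]'(by
            simp; omega) := by
      rw [List.getElem_of_eq (by rw [hfsplit, hcc])]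
      rw [List.getElem_append_right (by omega)]
      congr 1
      omega
    rw [heq]
    simp
    omega
  have hP1 : w.getD ((occPos w true)[i-1]) true = true := getD_occPos ht1
  have hP2 : w.getD ((occPos w true)[i]) true = true := getD_occPos ht
  have hQ1 : w.getD ((occPos w false)[i-1]) true = false := getD_occPos hf1
  have hQ2 : w.getD ((occPos w false)[i]) true = false := getD_occPos hf
  have := PS_concrete hi1 ht hf
    (x1 := (occPos w true)[i-1]) (x2 := (occPos w false)[i-1])
    (x3 := (occPos w true)[i]) (x4 := (occPos w false)[i])
    (by omega) (by omega) (by omega) (by intro x; tauto)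
  rw [this, hP1, hP2, hQ1, hQ2]

section Converse

variable {n i : ℕ} {w : List Bool}

set_option maxHeartbeats 2000000 in
lemma order_cases (hw : memL n w) (hi1 : 1 ≤ i) (hi2 : i < n) :
    ∀ (ht : i < (occPos w true).length) (hf : i < (occPos w false).length),
    (pairedSubword w i = [false, true, true, false] →
      (occPos w false)[i-1]'(by omega) < (occPos w true)[i-1]'(by omega) ∧
      (occPos w true)[i] < (occPos w false)[i]) ∧
    (pairedSubword w i = [true, false, true, false] →
      (occPos w true)[i-1]'(by omega) < (occPos w false)[i-1]'(by omega) ∧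
      (occPos w false)[i-1]'(by omega) < (occPos w true)[i] ∧
      (occPos w true)[i] < (occPos w false)[i]) := by
  intro ht hf
  have ht1 : i - 1 < (occPos w true).length := by omega
  have hf1 : i - 1 < (occPos w false).length := by omega
  set p1 := (occPos w true)[i-1] with hp1d
  set p2 := (occPos w true)[i] with hp2d
  set q1 := (occPos w false)[i-1] with hq1d
  set q2 := (occPos w false)[i] with hq2d
  have hP1 : w.getD p1 true = true := getD_occPos ht1
  have hP2 : w.getD p2 true = true := getD_occPos ht
  have hQ1 : w.getD q1 true = false := getD_occPos hf1
  have hQ2 : w.getD q2 true = false := getD_occPos hf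
  have hp12 : p1 < p2 := sorted_getElem_lt (sorted_occPos w true) ht1 ht (by omega)
  have hq12 : q1 < q2 := sorted_getElem_lt (sorted_occPos w false) hf1 hf (by omega)
  have hne : ∀ p q : ℕ, w.getD p true = true → w.getD q true = false → p ≠ q := by
    intro p q h1 h2 h
    rw [h] at h1; rw [h1] at h2; exact Bool.noConfusion h2
  have h11 := hne p1 q1 hP1 hQ1
  have h12 := hne p1 q2 hP1 hQ2
  have h21 := hne p2 q1 hP2 hQ1
  have h22 := hne p2 q2 hP2 hQ2
  rcases lt_or_gt_of_ne h11 with hc1 | hc1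
  · -- p1 < q1
    rcases lt_or_gt_of_ne h21 with hc2 | hc2
    · -- p2 < q1 : EENN
      have hps := PS_concrete hi1 ht hf (x1 := p1) (x2 := p2) (x3 := q1) (x4 := q2)
        hp12 hc2 hq12 (by intro x; tauto)
      rw [hP1, hP2, hQ1, hQ2] at hps
      constructor <;> intro h <;> rw [h] at hps <;> simp at hps
    · rcases lt_or_gt_of_ne h22 with hc3 | hc3
      · -- p1 < q1 < p2 < q2 : ENEN
        have hps := PS_concrete hi1 ht hf (x1 := p1) (x2 := q1) (x3 := p2) (x4 := q2)
          hc1 hc2 hc3 (by intro x; tauto)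
        rw [hP1, hP2, hQ1, hQ2] at hps
        constructor <;> intro h <;> rw [h] at hps
        · simp at hps
        · exact ⟨hc1, hc2, hc3⟩
      · -- p1 < q1 < q2 < p2 : ENNE
        have hps := PS_concrete hi1 ht hf (x1 := p1) (x2 := q1) (x3 := q2) (x4 := p2)
          hc1 hq12 hc3 (by intro x; tauto)
        rw [hP1, hP2, hQ1, hQ2] at hps
        constructor <;> intro h <;> rw [h] at hps <;> simp at hps
  · -- q1 < p1
    rcases lt_or_gt_of_ne h22 with hc2 | hc2
    · -- q1 < p1 < p2 < q2 : NEEN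
      have hps := PS_concrete hi1 ht hf (x1 := q1) (x2 := p1) (x3 := p2) (x4 := q2)
        hc1 hp12 hc2 (by intro x; tauto)
      rw [hP1, hP2, hQ1, hQ2] at hps
      constructor <;> intro h <;> rw [h] at hps
      · exact ⟨hc1, hc2⟩
      · simp at hps
    · rcases lt_or_gt_of_ne h12 with hc3 | hc3
      · -- q1 < p1 < q2 < p2 : NENE
        have hps := PS_concrete hi1 ht hf (x1 := q1) (x2 := p1) (x3 := q2) (x4 := p2)
          hc1 hc3 hc2 (by intro x; tauto)
        rw [hP1, hP2, hQ1, hQ2] at hps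
        constructor <;> intro h <;> rw [h] at hps <;> simp at hps
      · -- q1 < q2 < p1 < p2 : NNEE
        have hps := PS_concrete hi1 ht hf (x1 := q1) (x2 := q2) (x3 := p1) (x4 := p2)
          hq12 hc3 hp12 (by intro x; tauto)
        rw [hP1, hP2, hQ1, hQ2] at hps
        constructor <;> intro h <;> rw [h] at hps <;> simp at hps

lemma no_between {b : Bool} (hm : i < (occPos w b).length) {j : ℕ} (hjw : j < w.length)
    (hb : w[j] = b) (h1 : (occPos w b)[i-1]'(by omega) < j) (hlt : j < (occPos w b)[i])
    (hi1 : 1 ≤ i) : False := by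
  have hmem : j ∈ occPos w b := mem_occPos.2 ⟨hjw, hb⟩
  obtain ⟨m, hmlt, hmj⟩ := List.mem_iff_getElem.1 hmem
  have hm1 : i - 1 < m := by
    apply sorted_lt_of_getElem_lt (sorted_occPos w b) (by omega) hmlt
    omega
  have : (occPos w b)[i] ≤ (occPos w b)[m] := by
    apply sorted_getElem_le (sorted_occPos w b) hm hmlt
    omega
  omega

lemma decomp_of_PS3 (hw : memL n w) (hi1 : 1 ≤ i) (hi2 : i < n)
    (h : pairedSubword w i = [false, true, true, false]) :
    ∃ u v, w = u ++ true :: true :: v ∧ u.count true = i - 1 ∧ u.count false = i := by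
  have ht : i < (occPos w true).length := by rw [length_occPos, hw.1]; omega
  have hf : i < (occPos w false).length := by rw [length_occPos, hw.2]; omega
  have ht1 : i - 1 < (occPos w true).length := by omega
  have hf1 : i - 1 < (occPos w false).length := by omega
  obtain ⟨hqp, hpq⟩ := (order_cases hw hi1 hi2 ht hf).1 h
  have hp12 : (occPos w true)[i-1] < (occPos w true)[i] :=
    sorted_getElem_lt (sorted_occPos w true) ht1 ht (by omega)
  have hq2w : (occPos w false)[i] < w.length := occPos_getElem_lt hf
  have hadj : (occPos w true)[i] = (occPos w true)[i-1] + 1 := by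
    by_contra hne
    have hj : (occPos w true)[i-1] + 1 < (occPos w true)[i] := by omega
    set j := (occPos w true)[i-1] + 1 with hjd
    have hjw : j < w.length := by
      have := occPos_getElem_lt ht
      omega
    rcases Bool.dichotomy (w[j]'hjw) with hb | hb
    · exact no_between hf hjw hb (by omega) (by omega) hi1
    · exact no_between ht hjw hb (by omega) (by omega) hi1
  obtain ⟨u, v', hwio, hulen, hucnt⟩ := exists_decomp_of_getElem ht1
  obtain ⟨u2, v2, hw2, hu2len, hu2cnt⟩ := exists_decomp_of_getElem ht
  have hlen2 : (u ++ [true]).length = u2.length := by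
    simp only [List.length_append, List.length_cons, List.length_nil, hulen, hu2len, hadj]
  have h1 : w.take u2.length = u2 := by
    rw [hw2]; exact List.take_left' rfl
  have h2 : w.take (u ++ [true]).length = u ++ [true] := by
    rw [hwio, show u ++ true :: v' = (u ++ [true]) ++ v' by simp]
    exact List.take_left' rfl
  have hu2 : u2 = u ++ [true] := by
    rw [← h2, hlen2, h1]
  have hcf : u.count false = i := by
    have hu' : u = w.take ((occPos w true)[i-1]) := by
      rw [← hulen, hwio]
      exact (List.take_left' rfl).symm
    have hidx : (occPos w false)[i-1+1]'(by omega) = (occPos w false)[i]'hf := by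
      congr 1
      omega
    have := count_take_between (w := w) (b := false) (k := i-1)
      (p := (occPos w true)[i-1]) (by omega) (by omega)
      (by rw [hidx]; omega) (by have := occPos_getElem_lt ht1; omega)
    rw [← hu'] at this
    omega
  refine ⟨u, v2, ?_, hucnt, hcf⟩
  rw [hw2, hu2]
  simp

lemma decomp_of_PS2 (hw : memL n w) (hi1 : 1 ≤ i) (hi2 : i < n)
    (h : pairedSubword w i = [true, false, true, false]) :
    ∃ u v, w = u ++ false :: true :: v ∧ u.count true = i ∧ u.count false = i - 1 := by
  have ht : i < (occPos w true).length := by rw [length_occPos, hw.1]; omega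
  have hf : i < (occPos w false).length := by rw [length_occPos, hw.2]; omega
  have ht1 : i - 1 < (occPos w true).length := by omega
  have hf1 : i - 1 < (occPos w false).length := by omega
  obtain ⟨hpq, hqp2, hp2q2⟩ := (order_cases hw hi1 hi2 ht hf).2 h
  have hq2w : (occPos w false)[i] < w.length := occPos_getElem_lt hf
  have hadj : (occPos w true)[i] = (occPos w false)[i-1]'hf1 + 1 := by
    by_contra hne
    have hj : (occPos w false)[i-1]'hf1 + 1 < (occPos w true)[i] := by omega
    set j := (occPos w false)[i-1]'hf1 + 1 with hjd
    have hjw : j < w.length := by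
      have := occPos_getElem_lt ht
      omega
    rcases Bool.dichotomy (w[j]'hjw) with hb | hb
    · exact no_between hf hjw hb (by omega) (by omega) hi1
    · exact no_between ht hjw hb (by omega) (by omega) hi1
  obtain ⟨u, v', hwio, hulen, hucnt⟩ := exists_decomp_of_getElem hf1
  obtain ⟨u2, v2, hw2, hu2len, hu2cnt⟩ := exists_decomp_of_getElem ht
  have hlen2 : (u ++ [false]).length = u2.length := by
    simp only [List.length_append, List.length_cons, List.length_nil, hulen, hu2len, hadj]
  have h1 : w.take u2.length = u2 := by
    rw [hw2]; exact List.take_left' rfl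
  have h2 : w.take (u ++ [false]).length = u ++ [false] := by
    rw [hwio, show u ++ false :: v' = (u ++ [false]) ++ v' by simp]
    exact List.take_left' rfl
  have hu2 : u2 = u ++ [false] := by
    rw [← h2, hlen2, h1]
  have hct : u.count true = i := by
    have hu' : u = w.take ((occPos w false)[i-1]'hf1) := by
      rw [← hulen, hwio]
      exact (List.take_left' rfl).symm
    have hidx : (occPos w true)[i-1+1]'(by omega) = (occPos w true)[i]'ht := by
      congr 1
      omega
    have := count_take_between (w := w) (b := true) (k := i-1)
      (p := (occPos w false)[i-1]'hf1) (by omega) (by omega)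
      (by rw [hidx]; omega) (by have := occPos_getElem_lt hf1; omega)
    rw [← hu'] at this
    omega
  refine ⟨u, v2, ?_, hct, hucnt⟩
  rw [hw2, hu2]
  simp

end Converse

def phi (i : ℕ) (w : List Bool) : List Bool := (w.take (2*i)).map not ++ w.drop (2*i)

lemma phi_eq {i : ℕ} (u : List Bool) (x y : Bool) (v : List Bool)
    (hi : 1 ≤ i) (hu : u.length = 2*i - 1) :
    phi i (u ++ x :: y :: v) = u.map not ++ (!x) :: y :: v := by
  have h2 : (u ++ [x]).length = 2*i := by simp [hu]; omega
  have hsp : u ++ x :: y :: v = (u ++ [x]) ++ y :: v := by simp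
  rw [phi, hsp, List.take_left' h2, List.drop_left' h2]
  simp


lemma card_step (n i : ℕ) (hi1 : 1 ≤ i) (hi2 : i < n) (S : Finset (List Bool))
    (hS : ∀ w, w ∈ S ↔ memL n w) :
    (S.filter (fun w => pairedSubword w i = P3)).card
      = (S.filter (fun w => pairedSubword w i = P2)).card := by
  have hm3 : ∀ w ∈ S.filter (fun w => pairedSubword w i = P3),
      phi i w ∈ S.filter (fun w => pairedSubword w i = P2) ∧ phi i (phi i w) = w := by
    intro w hw
    rw [Finset.mem_filter, hS] at hw
    obtain ⟨hmem, hps⟩ := hw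
    obtain ⟨u, v, hdec, hct, hcf⟩ := decomp_of_PS3 hmem hi1 hi2 (by simpa [P3] using hps)
    have hulen : u.length = 2*i - 1 := by
      have := length_eq_counts u
      omega
    have hphi : phi i w = u.map not ++ false :: true :: v := by
      rw [hdec, phi_eq u true true v hi1 hulen]
      simp
    have hcnt_w : u.count true + 2 + v.count true = n ∧ u.count false + v.count false = n := by
      constructor
      · have := hmem.1
        rw [hdec] at this
        simp [List.count_append, List.count_cons] at this
        omega
      · have := hmem.2
        rw [hdec] at this
        simp [List.count_append, List.count_cons] at this
        omega
    have hmnt : (u.map not).count true = i := by rw [count_map_not]; simpa using hcf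
    have hmnf : (u.map not).count false = i - 1 := by rw [count_map_not]; simpa using hct
    have hmem2 : memL n (u.map not ++ false :: true :: v) := by
      constructor
      · simp [List.count_append, List.count_cons, hmnt]
        omega
      · simp [List.count_append, List.count_cons, hmnf]
        omega
    refine ⟨Finset.mem_filter.2 ⟨(hS _).2 (hphi ▸ hmem2), ?_⟩, ?_⟩
    · rw [hphi]
      rw [PS2_of_decomp hi1 hi2 hmem2 hmnt hmnf]
      rfl
    · rw [hphi, phi_eq (u.map not) false true v hi1 (by simpa using hulen), hdec]
      simp only [List.map_map, Bool.not_true]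
      have hnn : (not ∘ not) = id := by funext x; simp
      rw [hnn, List.map_id]
      simp
  have hm2 : ∀ w ∈ S.filter (fun w => pairedSubword w i = P2),
      phi i w ∈ S.filter (fun w => pairedSubword w i = P3) ∧ phi i (phi i w) = w := by
    intro w hw
    rw [Finset.mem_filter, hS] at hw
    obtain ⟨hmem, hps⟩ := hw
    obtain ⟨u, v, hdec, hct, hcf⟩ := decomp_of_PS2 hmem hi1 hi2 (by simpa [P2] using hps)
    have hulen : u.length = 2*i - 1 := by
      have := length_eq_counts u
      omega
    have hphi : phi i w = u.map not ++ true :: true :: v := by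
      rw [hdec, phi_eq u false true v hi1 hulen]
      simp
    have hmnt : (u.map not).count true = i - 1 := by rw [count_map_not]; simpa using hcf
    have hmnf : (u.map not).count false = i := by rw [count_map_not]; simpa using hct
    have hmem2 : memL n (u.map not ++ true :: true :: v) := by
      constructor
      · have := hmem.1
        rw [hdec] at this
        simp [List.count_append, List.count_cons] at this ⊢
        omega
      · have := hmem.2
        rw [hdec] at this
        simp [List.count_append, List.count_cons] at this ⊢
        omega
    refine ⟨Finset.mem_filter.2 ⟨(hS _).2 (hphi ▸ hmem2), ?_⟩, ?_⟩
    · rw [hphi]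
      rw [PS3_of_decomp hi1 hi2 hmem2 hmnt hmnf]
      rfl
    · rw [hphi, phi_eq (u.map not) true true v hi1 (by simpa using hulen), hdec]
      simp only [List.map_map, Bool.not_false]
      have hnn : (not ∘ not) = id := by funext x; simp
      rw [hnn, List.map_id]
      simp
  exact Finset.card_nbij' (fun w => phi i w) (fun w => phi i w)
    (fun w hw => (hm3 w hw).1) (fun w hw => (hm2 w hw).1)
    (fun w hw => (hm3 w hw).2) (fun w hw => (hm2 w hw).2)

end Aux2

theorem total_P3_matches_eq_total_P2_matches (n : ℕ) (hn : 1 ≤ n) :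
    ∑ᶠ w ∈ {w : List Bool | memL n w}, pmch n P3 w
      = ∑ᶠ w ∈ {w : List Bool | memL n w}, pmch n P2 w := by
  classical
  have hfin : {w : List Bool | memL n w}.Finite := by
    apply Set.Finite.subset (List.finite_length_eq Bool (2*n))
    intro w hw
    simp only [Set.mem_setOf_eq] at hw ⊢
    obtain ⟨h1, h2⟩ := hw
    have := Aux.length_eq_counts w
    omega
  rw [← hfin.coe_toFinset, finsum_mem_coe_finset, finsum_mem_coe_finset]
  have hP : ∀ P : List Bool, ∑ w ∈ hfin.toFinset, pmch n P w
      = ∑ p ∈ Finset.Icc 1 (n-1),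
          (hfin.toFinset.filter (fun w => pairedSubword w p = P)).card := by
    intro P
    have h1 : ∀ w : List Bool, pmch n P w
        = ∑ p ∈ Finset.Icc 1 (n-1), if pairedSubword w p = P then 1 else 0 := by
      intro w
      rw [pmch, Finset.card_filter]
    simp_rw [h1]
    rw [Finset.sum_comm]
    apply Finset.sum_congr rfl
    intro p _
    rw [Finset.card_filter]
  rw [hP P3, hP P2]
  apply Finset.sum_congr rfl
  intro p hp
  simp only [Finset.mem_Icc] at hp
  exact Aux2.card_step n p hp.1 (by omega) _
    (fun w => by simp [Set.Finite.mem_toFinset, Set.mem_setOf_eq])
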